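/- There is a positive constant C such that for every positive integer ℓ and every real-valued function f on B_ℓ, the square function satisfies ‖S(f)‖_4 ≤ C · ‖f‖_4. -/

import Mathlib

open Finset

/-- The value `±1 ∈ ℝ` attached to a coordinate of a point of `B_ℓ = {−1,1}^ℓ`,
modelled as `Fin ℓ → Bool`.  `sgn (x j)` is the Rademacher function at `x`. -/
def sgn (b : Bool) : ℝ := if b then 1 else -1

/-- `E_k(f)(x) = 2^{−ℓ+k} Σ_{y ∈ N_k(x)} f(y)`, the average of `f` over
`N_k(x) = {y ∈ B_ℓ : y_j = x_j for all j ≤ k}` (indices `0,…,k−1` in `Fin ℓ`). -/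
noncomputable def condExpB (ℓ k : ℕ) (f : (Fin ℓ → Bool) → ℝ) (x : Fin ℓ → Bool) : ℝ :=
  (2:ℝ) ^ ((k:ℤ) - (ℓ:ℤ)) *
    ∑ y ∈ Finset.univ.filter (fun y : Fin ℓ → Bool => ∀ j : Fin ℓ, (j:ℕ) < k → y j = x j), f y


/-- The square function
`S(f)(x) = (|E_0(f)(x)|² + Σ_{k=1}^ℓ |E_k(f)(x) − E_{k−1}(f)(x)|²)^{1/2}`. -/
noncomputable def sqFn (ℓ : ℕ) (f : (Fin ℓ → Bool) → ℝ) (x : Fin ℓ → Bool) : ℝ :=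
  Real.sqrt (|condExpB ℓ 0 f x| ^ 2 +
    ∑ k ∈ Finset.Icc 1 ℓ, |condExpB ℓ k f x - condExpB ℓ (k - 1) f x| ^ 2)


/-- `‖f‖_p = (2^{−ℓ} Σ_{x ∈ B_ℓ} |f(x)|ᵖ)^{1/p}` for a function `f` on `B_ℓ`. -/
noncomputable def pnorm (ℓ : ℕ) (p : ℝ) (f : (Fin ℓ → Bool) → ℝ) : ℝ :=
  ((2:ℝ) ^ (-(ℓ:ℤ)) * ∑ x : Fin ℓ → Bool, |f x| ^ p) ^ (1 / p)



def bflip {ℓ : ℕ} (i : Fin ℓ) (x : Fin ℓ → Bool) : Fin ℓ → Bool :=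
  Function.update x i (!(x i))

lemma bflip_apply_ne {ℓ : ℕ} (i j : Fin ℓ) (x : Fin ℓ → Bool) (h : j ≠ i) :
    bflip i x j = x j := Function.update_of_ne h _ _

lemma bflip_apply_self {ℓ : ℕ} (i : Fin ℓ) (x : Fin ℓ → Bool) :
    bflip i x i = !(x i) := Function.update_self _ _ _

lemma bflip_bflip {ℓ : ℕ} (i : Fin ℓ) (x : Fin ℓ → Bool) : bflip i (bflip i x) = x := by
  funext j
  by_cases h : j = i
  · subst h; rw [bflip_apply_self, bflip_apply_self, Bool.not_not]
  · rw [bflip_apply_ne _ _ _ h, bflip_apply_ne _ _ _ h]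

lemma condExpB_congr {ℓ k : ℕ} (f : (Fin ℓ → Bool) → ℝ) {x x' : Fin ℓ → Bool}
    (h : ∀ j : Fin ℓ, (j:ℕ) < k → x j = x' j) :
    condExpB ℓ k f x = condExpB ℓ k f x' := by
  unfold condExpB
  congr 1
  apply Finset.sum_congr _ (fun _ _ => rfl)
  apply Finset.filter_congr
  intro y _
  constructor
  · intro hy j hj; rw [hy j hj, h j hj]
  · intro hy j hj; rw [hy j hj, h j hj]

lemma condExpB_self {ℓ : ℕ} (f : (Fin ℓ → Bool) → ℝ) (x : Fin ℓ → Bool) :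
    condExpB ℓ ℓ f x = f x := by
  unfold condExpB
  have : Finset.univ.filter (fun y : Fin ℓ → Bool => ∀ j : Fin ℓ, (j:ℕ) < ℓ → y j = x j)
      = {x} := by
    ext y
    simp only [Finset.mem_filter, Finset.mem_univ, true_and, Finset.mem_singleton]
    constructor
    · intro h; funext j; exact h j j.isLt
    · intro h; subst h; intro j _; rfl
  rw [this]
  simp

lemma condExpB_flip {ℓ : ℕ} (f : (Fin ℓ → Bool) → ℝ) (i : Fin ℓ) (x : Fin ℓ → Bool) :
    condExpB ℓ (i.val + 1) f x + condExpB ℓ (i.val + 1) f (bflip i x)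
      = 2 * condExpB ℓ i.val f x := by
  classical
  set A := Finset.univ.filter (fun y : Fin ℓ → Bool => ∀ j : Fin ℓ, (j:ℕ) < i.val + 1 → y j = x j)
  set A' := Finset.univ.filter
    (fun y : Fin ℓ → Bool => ∀ j : Fin ℓ, (j:ℕ) < i.val + 1 → y j = bflip i x j)
  set B := Finset.univ.filter (fun y : Fin ℓ → Bool => ∀ j : Fin ℓ, (j:ℕ) < i.val → y j = x j)
  have hdisj : Disjoint A A' := by
    rw [Finset.disjoint_left]
    intro y hy hy'
    simp only [A, A', Finset.mem_filter, Finset.mem_univ, true_and] at hy hy'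
    have h1 := hy i (Nat.lt_succ_self _)
    have h2 := hy' i (Nat.lt_succ_self _)
    rw [bflip_apply_self] at h2
    rw [h1] at h2
    simp at h2
  have hunion : A ∪ A' = B := by
    ext y
    simp only [A, A', B, Finset.mem_union, Finset.mem_filter, Finset.mem_univ, true_and]
    constructor
    · rintro (h | h) j hj
      · exact h j (Nat.lt_succ_of_lt hj)
      · rw [h j (Nat.lt_succ_of_lt hj), bflip_apply_ne]
        exact fun hji => by rw [hji] at hj; exact lt_irrefl _ hj
    · intro h
      rcases Bool.eq_or_eq_not (y i) (x i) with hi | hi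
      · left
        intro j hj
        rcases Nat.lt_succ_iff_lt_or_eq.mp hj with hj' | hj'
        · exact h j hj'
        · have : j = i := Fin.ext hj'
          subst this; exact hi
      · right
        intro j hj
        rcases Nat.lt_succ_iff_lt_or_eq.mp hj with hj' | hj'
        · rw [h j hj', bflip_apply_ne]
          exact fun hji => by rw [hji] at hj'; exact lt_irrefl _ hj'
        · have : j = i := Fin.ext hj'
          subst this; rw [bflip_apply_self]; exact hi
  unfold condExpB
  rw [← mul_add, ← Finset.sum_union hdisj, hunion]
  have hpow : (2:ℝ) ^ (((i.val + 1 : ℕ):ℤ) - (ℓ:ℤ)) = 2 * (2:ℝ) ^ (((i.val:ℕ):ℤ) - (ℓ:ℤ)) := by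
    rw [← zpow_one_add₀ (two_ne_zero)]
    congr 1
    push_cast
    ring
  rw [hpow, mul_assoc]




lemma condExpB_bflip_eq {ℓ k : ℕ} (f : (Fin ℓ → Bool) → ℝ) (i : Fin ℓ) (hk : k ≤ i.val)
    (x : Fin ℓ → Bool) : condExpB ℓ k f (bflip i x) = condExpB ℓ k f x := by
  apply condExpB_congr
  intro j hj
  apply bflip_apply_ne
  intro hji
  subst hji
  exact absurd (lt_of_lt_of_le hj hk) (lt_irrefl _)

def bflipEquiv {ℓ : ℕ} (i : Fin ℓ) : Equiv (Fin ℓ → Bool) (Fin ℓ → Bool) where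
  toFun := bflip i
  invFun := bflip i
  left_inv := bflip_bflip i
  right_inv := bflip_bflip i

lemma sum_flip_zero {ℓ : ℕ} (i : Fin ℓ) (g h : (Fin ℓ → Bool) → ℝ)
    (hg : ∀ x, g (bflip i x) = g x) (hh : ∀ x, h (bflip i x) = - h x) :
    ∑ x : Fin ℓ → Bool, g x * h x = 0 := by
  have key : ∑ x : Fin ℓ → Bool, g x * h x
      = ∑ x : Fin ℓ → Bool, g (bflip i x) * h (bflip i x) :=
    (Fintype.sum_equiv (bflipEquiv i) _ _ (fun x => rfl)).symm
  simp only [hg, hh, mul_neg] at key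
  rw [Finset.sum_neg_distrib] at key
  linarith [key]




lemma telescope_Icc (g : ℕ → ℝ) (n : ℕ) :
    ∑ k ∈ Finset.Icc 1 n, (g k - g (k - 1)) = g n - g 0 := by
  induction n with
  | zero => simp
  | succ n ih =>
      rw [Finset.sum_Icc_succ_top (Nat.one_le_iff_ne_zero.mpr (Nat.succ_ne_zero n)), ih]
      simp

section main
variable {ℓ : ℕ} (f : (Fin ℓ → Bool) → ℝ)

/-- flipped martingale difference -/
lemma diff_flip {m : ℕ} (hm1 : 1 ≤ m) (hm : m ≤ ℓ) (x : Fin ℓ → Bool) :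
    condExpB ℓ m f (bflip ⟨m - 1, by omega⟩ x) - condExpB ℓ (m - 1) f (bflip ⟨m - 1, by omega⟩ x)
      = -(condExpB ℓ m f x - condExpB ℓ (m - 1) f x) := by
  set i : Fin ℓ := ⟨m - 1, by omega⟩
  have hiv : i.val + 1 = m := by simp only [i]; omega
  have h1 : condExpB ℓ m f x + condExpB ℓ m f (bflip i x) = 2 * condExpB ℓ (m - 1) f x := by
    have := condExpB_flip f i x
    rw [hiv] at this
    simpa [i] using this
  have h2 : condExpB ℓ (m - 1) f (bflip i x) = condExpB ℓ (m - 1) f x :=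
    condExpB_bflip_eq f i (le_refl _) x
  rw [h2]; linarith

lemma low_flip {k m : ℕ} (hm1 : 1 ≤ m) (hm : m ≤ ℓ) (hk : k ≤ m - 1) (x : Fin ℓ → Bool) :
    condExpB ℓ k f (bflip ⟨m - 1, by omega⟩ x) = condExpB ℓ k f x :=
  condExpB_bflip_eq f _ hk x

/-- Chunk A : fourth moment step -/
lemma fourth_step {m : ℕ} (hm1 : 1 ≤ m) (hm : m ≤ ℓ) :
    6 * ∑ x : Fin ℓ → Bool,
        (condExpB ℓ (m - 1) f x) ^ 2 * (condExpB ℓ m f x - condExpB ℓ (m - 1) f x) ^ 2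
      ≤ (∑ x : Fin ℓ → Bool, (condExpB ℓ m f x) ^ 4)
        - ∑ x : Fin ℓ → Bool, (condExpB ℓ (m - 1) f x) ^ 4 := by
  set i : Fin ℓ := ⟨m - 1, by omega⟩
  set a : (Fin ℓ → Bool) → ℝ := fun x => condExpB ℓ (m - 1) f x with ha_def
  set b : (Fin ℓ → Bool) → ℝ := fun x => condExpB ℓ m f x - condExpB ℓ (m - 1) f x with hb_def
  have ha : ∀ x, a (bflip i x) = a x := fun x => low_flip f hm1 hm (le_refl _) x
  have hb : ∀ x, b (bflip i x) = - b x := fun x => diff_flip f hm1 hm x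
  have h1 : ∑ x : Fin ℓ → Bool, (a x ^ 3) * b x = 0 :=
    sum_flip_zero i _ _ (fun x => by rw [ha]) hb
  have h2 : ∑ x : Fin ℓ → Bool, a x * (b x ^ 3) = 0 :=
    sum_flip_zero i _ _ ha (fun x => by rw [hb]; ring)
  have h3 : (0:ℝ) ≤ ∑ x : Fin ℓ → Bool, b x ^ 4 :=
    Finset.sum_nonneg fun x _ => by positivity
  have hsum : ∑ x : Fin ℓ → Bool, (condExpB ℓ m f x) ^ 4
      = (∑ x : Fin ℓ → Bool, a x ^ 4) + 4 * (∑ x : Fin ℓ → Bool, (a x ^ 3) * b x)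
        + 6 * (∑ x : Fin ℓ → Bool, a x ^ 2 * b x ^ 2)
        + 4 * (∑ x : Fin ℓ → Bool, a x * (b x ^ 3)) + ∑ x : Fin ℓ → Bool, b x ^ 4 := by
    rw [Finset.mul_sum, Finset.mul_sum, Finset.mul_sum, ← Finset.sum_add_distrib,
      ← Finset.sum_add_distrib, ← Finset.sum_add_distrib, ← Finset.sum_add_distrib]
    apply Finset.sum_congr rfl
    intro x _
    have hx : condExpB ℓ m f x = a x + b x := by simp [ha_def, hb_def]
    rw [hx]; ring
  rw [hsum, h1, h2]
  have : ∑ x : Fin ℓ → Bool, a x ^ 4 = ∑ x : Fin ℓ → Bool, (condExpB ℓ (m-1) f x) ^ 4 := rfl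
  linarith

/-- Chunk A' : telescoped bound on Q -/
lemma Q_bound :
    6 * ∑ m ∈ Finset.Icc 1 ℓ, ∑ x : Fin ℓ → Bool,
        (condExpB ℓ (m - 1) f x) ^ 2 * (condExpB ℓ m f x - condExpB ℓ (m - 1) f x) ^ 2
      ≤ ∑ x : Fin ℓ → Bool, (f x) ^ 4 := by
  set g : ℕ → ℝ := fun k => ∑ x : Fin ℓ → Bool, (condExpB ℓ k f x) ^ 4 with hg_def
  have step : ∀ m ∈ Finset.Icc 1 ℓ,
      6 * ∑ x : Fin ℓ → Bool,
          (condExpB ℓ (m - 1) f x) ^ 2 * (condExpB ℓ m f x - condExpB ℓ (m - 1) f x) ^ 2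
        ≤ g m - g (m - 1) := by
    intro m hm
    rw [Finset.mem_Icc] at hm
    exact fourth_step f hm.1 hm.2
  calc 6 * ∑ m ∈ Finset.Icc 1 ℓ, ∑ x : Fin ℓ → Bool,
          (condExpB ℓ (m - 1) f x) ^ 2 * (condExpB ℓ m f x - condExpB ℓ (m - 1) f x) ^ 2
      = ∑ m ∈ Finset.Icc 1 ℓ, 6 * ∑ x : Fin ℓ → Bool,
          (condExpB ℓ (m - 1) f x) ^ 2 * (condExpB ℓ m f x - condExpB ℓ (m - 1) f x) ^ 2 := by
        rw [Finset.mul_sum]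
    _ ≤ ∑ m ∈ Finset.Icc 1 ℓ, (g m - g (m - 1)) := Finset.sum_le_sum step
    _ = g ℓ - g 0 := telescope_Icc g ℓ
    _ ≤ ∑ x : Fin ℓ → Bool, (f x) ^ 4 := by
        have h0 : (0:ℝ) ≤ g 0 := Finset.sum_nonneg fun x _ => by positivity
        have hℓ : g ℓ = ∑ x : Fin ℓ → Bool, (f x) ^ 4 := by
          apply Finset.sum_congr rfl
          intro x _
          rw [condExpB_self]
        linarith
end main




section main
variable {ℓ : ℕ} (f : (Fin ℓ → Bool) → ℝ)

/-- the summand of the martingale transform -/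
noncomputable def cc (m : ℕ) (x : Fin ℓ → Bool) : ℝ :=
  condExpB ℓ (m - 1) f x * (condExpB ℓ m f x - condExpB ℓ (m - 1) f x)

lemma cross_zero {m n : ℕ} (hm1 : 1 ≤ m) (hmn : m < n) (hn : n ≤ ℓ) :
    ∑ x : Fin ℓ → Bool, cc f m x * cc f n x = 0 := by
  have hn1 : 1 ≤ n := le_trans hm1 (le_of_lt hmn)
  set i : Fin ℓ := ⟨n - 1, by omega⟩ with hi_def
  have key : ∑ x : Fin ℓ → Bool,
      (condExpB ℓ (m - 1) f x * (condExpB ℓ m f x - condExpB ℓ (m - 1) f x)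
        * condExpB ℓ (n - 1) f x)
      * (condExpB ℓ n f x - condExpB ℓ (n - 1) f x) = 0 := by
    apply sum_flip_zero i
    · intro x
      have h1 : condExpB ℓ (m - 1) f (bflip i x) = condExpB ℓ (m - 1) f x :=
        condExpB_bflip_eq f i (by simp only [hi_def, Fin.val_mk]; omega) x
      have h2 : condExpB ℓ m f (bflip i x) = condExpB ℓ m f x :=
        condExpB_bflip_eq f i (by simp only [hi_def, Fin.val_mk]; omega) x
      have h3 : condExpB ℓ (n - 1) f (bflip i x) = condExpB ℓ (n - 1) f x :=
        condExpB_bflip_eq f i (by simp only [hi_def, Fin.val_mk]; omega) x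
      rw [h1, h2, h3]
    · intro x
      exact diff_flip f hn1 hn x
  rw [← key]
  apply Finset.sum_congr rfl
  intro x _
  simp only [cc]
  ring

end main




section main
variable {ℓ : ℕ} (f : (Fin ℓ → Bool) → ℝ)

lemma M_sq :
    ∑ x : Fin ℓ → Bool, (∑ m ∈ Finset.Icc 1 ℓ, cc f m x) ^ 2
      = ∑ m ∈ Finset.Icc 1 ℓ, ∑ x : Fin ℓ → Bool, (cc f m x) ^ 2 := by
  have expand : ∀ x : Fin ℓ → Bool, (∑ m ∈ Finset.Icc 1 ℓ, cc f m x) ^ 2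
      = ∑ m ∈ Finset.Icc 1 ℓ, ∑ n ∈ Finset.Icc 1 ℓ, cc f m x * cc f n x := by
    intro x; rw [sq, Finset.sum_mul_sum]
  rw [Finset.sum_congr rfl (fun x _ => expand x), Finset.sum_comm]
  apply Finset.sum_congr rfl
  intro m hm
  rw [Finset.mem_Icc] at hm
  rw [Finset.sum_comm, Finset.sum_eq_single m]
  · apply Finset.sum_congr rfl; intro x _; rw [sq]
  · intro n hn hne
    rw [Finset.mem_Icc] at hn
    rcases lt_or_gt_of_ne hne with h | h
    · rw [← cross_zero f hn.1 h hm.2]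
      apply Finset.sum_congr rfl; intro x _; ring
    · exact cross_zero f hm.1 h hn.2
  · intro hmem
    exact absurd (Finset.mem_Icc.mpr hm) hmem

lemma T_eq (x : Fin ℓ → Bool) :
    (condExpB ℓ 0 f x) ^ 2
        + ∑ k ∈ Finset.Icc 1 ℓ, (condExpB ℓ k f x - condExpB ℓ (k - 1) f x) ^ 2
      = f x ^ 2 - 2 * ∑ m ∈ Finset.Icc 1 ℓ, cc f m x := by
  have tele := telescope_Icc (fun k => (condExpB ℓ k f x) ^ 2) ℓ
  have split : ∑ k ∈ Finset.Icc 1 ℓ,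
      ((fun k => (condExpB ℓ k f x) ^ 2) k - (fun k => (condExpB ℓ k f x) ^ 2) (k - 1))
      = (∑ k ∈ Finset.Icc 1 ℓ, (condExpB ℓ k f x - condExpB ℓ (k - 1) f x) ^ 2)
        + 2 * ∑ m ∈ Finset.Icc 1 ℓ, cc f m x := by
    rw [Finset.mul_sum, ← Finset.sum_add_distrib]
    apply Finset.sum_congr rfl
    intro k _
    simp only [cc]
    ring
  rw [split] at tele
  have hself : condExpB ℓ ℓ f x = f x := condExpB_self f x
  rw [hself] at tele
  linarith

lemma l2_triangle {X : Type*} [Fintype X] (u v : X → ℝ) :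
    Real.sqrt (∑ x : X, (u x + v x) ^ 2)
      ≤ Real.sqrt (∑ x : X, u x ^ 2) + Real.sqrt (∑ x : X, v x ^ 2) := by
  let U : EuclideanSpace ℝ X := WithLp.toLp 2 u
  let V : EuclideanSpace ℝ X := WithLp.toLp 2 v
  have hU : ‖U‖ = Real.sqrt (∑ x : X, u x ^ 2) := by
    rw [EuclideanSpace.norm_eq]
    congr 1
    apply Finset.sum_congr rfl
    intro x _
    rw [Real.norm_eq_abs, sq_abs]
  have hV : ‖V‖ = Real.sqrt (∑ x : X, v x ^ 2) := by
    rw [EuclideanSpace.norm_eq]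
    congr 1
    apply Finset.sum_congr rfl
    intro x _
    rw [Real.norm_eq_abs, sq_abs]
  have hUV : ‖U + V‖ = Real.sqrt (∑ x : X, (u x + v x) ^ 2) := by
    rw [EuclideanSpace.norm_eq]
    congr 1
    apply Finset.sum_congr rfl
    intro x _
    rw [Real.norm_eq_abs, sq_abs]
    rfl
  rw [← hU, ← hV, ← hUV]
  exact norm_add_le U V
end main






section main
variable {ℓ : ℕ} (f : (Fin ℓ → Bool) → ℝ)

/-- the T-function: square of the square function -/
noncomputable def Tfun (f : (Fin ℓ → Bool) → ℝ) (x : Fin ℓ → Bool) : ℝ :=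
  (condExpB ℓ 0 f x) ^ 2
    + ∑ k ∈ Finset.Icc 1 ℓ, (condExpB ℓ k f x - condExpB ℓ (k - 1) f x) ^ 2

lemma Tfun_nonneg (x : Fin ℓ → Bool) : 0 ≤ Tfun f x := by
  unfold Tfun
  have : (0:ℝ) ≤ ∑ k ∈ Finset.Icc 1 ℓ,
      (condExpB ℓ k f x - condExpB ℓ (k - 1) f x) ^ 2 :=
    Finset.sum_nonneg fun k _ => sq_nonneg _
  positivity

lemma main_bound :
    ∑ x : Fin ℓ → Bool, (Tfun f x) ^ 2 ≤ 4 * ∑ x : Fin ℓ → Bool, (f x) ^ 4 := by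
  set M : (Fin ℓ → Bool) → ℝ := fun x => ∑ m ∈ Finset.Icc 1 ℓ, cc f m x with hM_def
  set A : ℝ := ∑ x : Fin ℓ → Bool, (f x) ^ 4 with hA_def
  have hA : (0:ℝ) ≤ A := Finset.sum_nonneg fun x _ => by positivity
  set Q : ℝ := ∑ x : Fin ℓ → Bool, (M x) ^ 2 with hQ_def
  have hQ : (0:ℝ) ≤ Q := Finset.sum_nonneg fun x _ => sq_nonneg _
  -- 6 Q ≤ A
  have h6Q : 6 * Q ≤ A := by
    rw [hQ_def, hM_def]
    calc 6 * ∑ x : Fin ℓ → Bool, (∑ m ∈ Finset.Icc 1 ℓ, cc f m x) ^ 2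
        = 6 * ∑ m ∈ Finset.Icc 1 ℓ, ∑ x : Fin ℓ → Bool, (cc f m x) ^ 2 := by rw [M_sq]
      _ = 6 * ∑ m ∈ Finset.Icc 1 ℓ, ∑ x : Fin ℓ → Bool,
            (condExpB ℓ (m - 1) f x) ^ 2
              * (condExpB ℓ m f x - condExpB ℓ (m - 1) f x) ^ 2 := by
          congr 1
          apply Finset.sum_congr rfl; intro m _
          apply Finset.sum_congr rfl; intro x _
          simp only [cc]; ring
      _ ≤ A := Q_bound f
  -- T = f² + (-2 M)
  have hT : ∀ x, Tfun f x = f x ^ 2 + (-2 * M x) := by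
    intro x
    rw [Tfun, T_eq f x, hM_def]
    ring
  set s : ℝ := ∑ x : Fin ℓ → Bool, (Tfun f x) ^ 2 with hs_def
  have hs : (0:ℝ) ≤ s := Finset.sum_nonneg fun x _ => sq_nonneg _
  have htri : Real.sqrt s ≤ Real.sqrt A + Real.sqrt (4 * Q) := by
    have h1 : s = ∑ x : Fin ℓ → Bool, (f x ^ 2 + (-2 * M x)) ^ 2 := by
      rw [hs_def]
      exact Finset.sum_congr rfl fun x _ => by rw [hT x]
    have h2 : ∑ x : Fin ℓ → Bool, (f x ^ 2) ^ 2 = A := by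
      rw [hA_def]; exact Finset.sum_congr rfl fun x _ => by ring
    have h3 : ∑ x : Fin ℓ → Bool, (-2 * M x) ^ 2 = 4 * Q := by
      rw [hQ_def, Finset.mul_sum]
      exact Finset.sum_congr rfl fun x _ => by ring
    rw [h1, ← h2, ← h3]
    exact l2_triangle _ _
  have hsqrt4Q : Real.sqrt (4 * Q) ≤ Real.sqrt A := by
    apply Real.sqrt_le_sqrt
    linarith
  have hfinal : Real.sqrt s ≤ 2 * Real.sqrt A := by linarith
  have h1 := Real.sq_sqrt hs
  have h2 := Real.sq_sqrt hA
  nlinarith [Real.sqrt_nonneg s, Real.sqrt_nonneg A]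

/-- there is `C > 0` such that `‖S(f)‖_4 ≤ C ‖f‖_4` for every positive
integer `ℓ` and every function `f` on `B_ℓ`. -/
theorem stmt19 :
    ∃ C : ℝ, 0 < C ∧ ∀ (ℓ : ℕ), 0 < ℓ → ∀ f : (Fin ℓ → Bool) → ℝ,
      pnorm ℓ 4 (sqFn ℓ f) ≤ C * pnorm ℓ 4 f := by
  refine ⟨2, by norm_num, ?_⟩
  intro ℓ hℓ f
  unfold pnorm
  set P : ℝ := (2:ℝ) ^ (-(ℓ:ℤ)) with hP_def
  have hP : (0:ℝ) < P := by positivity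
  have hsq : ∀ x : Fin ℓ → Bool, |sqFn ℓ f x| ^ (4:ℝ) = (Tfun f x) ^ 2 := by
    intro x
    have hTx : sqFn ℓ f x = Real.sqrt (Tfun f x) := by
      unfold sqFn Tfun
      congr 1
      rw [sq_abs]
      congr 1
      exact Finset.sum_congr rfl fun k _ => by rw [sq_abs]
    rw [hTx, abs_of_nonneg (Real.sqrt_nonneg _)]
    rw [show (4:ℝ) = ((4:ℕ):ℝ) by norm_num, Real.rpow_natCast]
    have : Real.sqrt (Tfun f x) ^ (4:ℕ) = (Real.sqrt (Tfun f x) ^ 2) ^ 2 := by ring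
    rw [this, Real.sq_sqrt (Tfun_nonneg f x)]
  have hf4 : ∀ x : Fin ℓ → Bool, |f x| ^ (4:ℝ) = (f x) ^ 4 := by
    intro x
    rw [show (4:ℝ) = ((4:ℕ):ℝ) by norm_num, Real.rpow_natCast]
    have : |f x| ^ (4:ℕ) = (|f x| ^ 2) ^ 2 := by ring
    rw [this, sq_abs]
    ring
  rw [Finset.sum_congr rfl fun x _ => hsq x, Finset.sum_congr rfl fun x _ => hf4 x]
  set A : ℝ := ∑ x : Fin ℓ → Bool, (f x) ^ 4 with hA_def
  have hA : (0:ℝ) ≤ A := Finset.sum_nonneg fun x _ => by positivity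
  set s : ℝ := ∑ x : Fin ℓ → Bool, (Tfun f x) ^ 2 with hs_def
  have hs : (0:ℝ) ≤ s := Finset.sum_nonneg fun x _ => sq_nonneg _
  have hkey : P * s ≤ 16 * (P * A) := by
    have := main_bound f
    rw [← hA_def, ← hs_def] at this
    nlinarith
  calc (P * s) ^ ((1:ℝ)/4)
      ≤ (16 * (P * A)) ^ ((1:ℝ)/4) := by
        apply Real.rpow_le_rpow (by positivity) hkey (by norm_num)
    _ = (16:ℝ) ^ ((1:ℝ)/4) * (P * A) ^ ((1:ℝ)/4) := by
        rw [Real.mul_rpow (by norm_num) (by positivity)]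
    _ = 2 * (P * A) ^ ((1:ℝ)/4) := by
        congr 1
        rw [show (16:ℝ) = 2 ^ (4:ℕ) by norm_num, ← Real.rpow_natCast 2 4,
          ← Real.rpow_mul (by norm_num : (0:ℝ) ≤ 2)]
        norm_num
end main
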